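/- Let A be a nontrivial pseudo BL-algebra satisfying the identities (x→y)⁻ = (x⇝y)⁻ and (x→y)·(x⇝y) = (x⇝y)·(x→y) for all x, y ∈ A. Then every maximal filter of A is normal if, and only if, A satisfies ((x₁·⋯·xₙ)⁻)² ≤ (x_{π(1)}²·⋯·x_{π(n)}²)⁻ for all n ≥ 1, all elements x₁, …, xₙ and all permutations π of {1, …, n}. -/

import Mathlib

/-- A pseudo BL-algebra: a bounded lattice `(A; ∨, ∧, 0, 1)` together with a monoid
structure `(A; ·, 1)` and two residua `→` (`himp`) and `⇝` (`rimp`) satisfying the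
residuation, divisibility and prelinearity conditions. -/
class PseudoBL (A : Type*) extends Lattice A, Monoid A, Zero A where
  himp : A → A → A
  rimp : A → A → A
  zero_le : ∀ x : A, (0 : A) ≤ x
  le_one : ∀ x : A, x ≤ 1
  mul_le_iff_himp : ∀ x y z : A, x * y ≤ z ↔ x ≤ himp y z
  mul_le_iff_rimp : ∀ x y z : A, x * y ≤ z ↔ y ≤ rimp x z
  himp_mul_inf : ∀ x y : A, himp x y * x = x ⊓ y
  mul_rimp_inf : ∀ x y : A, y * rimp y x = x ⊓ y
  prelin_himp : ∀ x y : A, himp x y ⊔ himp y x = 1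
  prelin_rimp : ∀ x y : A, rimp x y ⊔ rimp y x = 1

namespace PseudoBL

variable {A : Type*} [PseudoBL A]

/-- The left negation `x⁻ := x → 0`. -/
def lneg (x : A) : A := himp x 0

/-- A filter: a nonempty subset closed under `·` and upward closed. -/
def IsFilter (F : Set A) : Prop :=
  F.Nonempty ∧ (∀ x ∈ F, ∀ y ∈ F, x * y ∈ F) ∧ ∀ x ∈ F, ∀ y : A, x ≤ y → y ∈ F

/-- A maximal filter: a proper filter not properly contained in any proper filter. -/
def IsMaximalFilter (F : Set A) : Prop :=
  IsFilter F ∧ F ≠ Set.univ ∧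
    ∀ G : Set A, IsFilter G → G ≠ Set.univ → F ⊆ G → F = G

/-- A normal filter: `x→y ∈ F` iff `x⇝y ∈ F`. -/
def IsNormalFilter (F : Set A) : Prop :=
  ∀ x y : A, himp x y ∈ F ↔ rimp x y ∈ F

end PseudoBL

open PseudoBL

namespace Stmt9Aux

variable {A : Type*} [PseudoBL A]

/-! ### Basic residuation API -/

lemma le_himp_iff {x y z : A} : x ≤ himp y z ↔ x * y ≤ z :=
  (PseudoBL.mul_le_iff_himp x y z).symm

lemma le_rimp_iff {x y z : A} : y ≤ rimp x z ↔ x * y ≤ z :=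
  (PseudoBL.mul_le_iff_rimp x y z).symm

lemma bot_le' (x : A) : (0 : A) ≤ x := PseudoBL.zero_le x

lemma le_top' (x : A) : x ≤ 1 := PseudoBL.le_one x

lemma le_zero_iff' {x : A} : x ≤ 0 ↔ x = 0 :=
  ⟨fun h => le_antisymm h (bot_le' x), fun h => h ▸ le_rfl⟩

lemma mul_le_left' (x y : A) : x * y ≤ x := by
  rw [PseudoBL.mul_le_iff_rimp]
  exact le_trans (le_top' y) (le_rimp_iff.2 (by rw [mul_one]))

lemma mul_le_right' (x y : A) : x * y ≤ y := by
  rw [PseudoBL.mul_le_iff_himp]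
  exact le_trans (le_top' x) (le_himp_iff.2 (by rw [one_mul]))

lemma mul_le_mul' {x x' y y' : A} (h1 : x ≤ x') (h2 : y ≤ y') : x * y ≤ x' * y' := by
  have hA : x * y ≤ x' * y := by
    rw [PseudoBL.mul_le_iff_himp]
    exact le_trans h1 (le_himp_iff.2 le_rfl)
  have hB : x' * y ≤ x' * y' := by
    rw [PseudoBL.mul_le_iff_rimp]
    exact le_trans h2 (le_rimp_iff.2 le_rfl)
  exact le_trans hA hB

lemma pow_le_pow_left'' {x y : A} (h : x ≤ y) : ∀ n : ℕ, x ^ n ≤ y ^ n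
  | 0 => by rw [pow_zero, pow_zero]
  | n + 1 => by
    rw [pow_succ, pow_succ]
    exact mul_le_mul' (pow_le_pow_left'' h n) h

lemma one_le_iff {x : A} : 1 ≤ x ↔ x = 1 :=
  ⟨fun h => le_antisymm (le_top' x) h, fun h => h ▸ le_rfl⟩

lemma le_iff_himp {x y : A} : x ≤ y ↔ himp x y = 1 := by
  constructor
  · intro h
    rw [← one_le_iff, le_himp_iff, one_mul]; exact h
  · intro h
    have : (1 : A) ≤ himp x y := h ▸ le_rfl
    have := le_himp_iff.1 this
    rwa [one_mul] at this

lemma le_iff_rimp {x y : A} : x ≤ y ↔ rimp x y = 1 := by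
  constructor
  · intro h
    rw [← one_le_iff, le_rimp_iff, mul_one]; exact h
  · intro h
    have : (1 : A) ≤ rimp x y := h ▸ le_rfl
    have := le_rimp_iff.1 this
    rwa [mul_one] at this

lemma himp_mul_le (x y : A) : himp x y * x ≤ y := by
  rw [PseudoBL.himp_mul_inf]; exact inf_le_right

lemma mul_rimp_le (x y : A) : x * rimp x y ≤ y := by
  rw [PseudoBL.mul_rimp_inf]; exact inf_le_left

/-! ### Negation API -/

lemma le_lneg_iff {z x : A} : z ≤ lneg x ↔ z * x ≤ 0 := by
  unfold lneg; rw [le_himp_iff]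

lemma lneg_mul_self (x : A) : lneg x * x = 0 := by
  unfold lneg
  rw [PseudoBL.himp_mul_inf]
  exact le_antisymm inf_le_right (le_inf (bot_le' x) le_rfl)

lemma lneg_zero : lneg (0 : A) = 1 := by
  rw [← one_le_iff, le_lneg_iff, one_mul]

lemma lneg_eq_one_of_le {x : A} (h : x ≤ 0) : lneg x = 1 := by
  rw [← one_le_iff, le_lneg_iff, one_mul]; exact h

lemma lneg_mul (x y : A) : lneg (x * y) = himp x (lneg y) := by
  apply le_antisymm
  · rw [le_himp_iff, le_lneg_iff, mul_assoc]
    exact le_of_eq (lneg_mul_self (x*y))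
  · rw [le_lneg_iff, ← mul_assoc]
    calc himp x (lneg y) * x * y ≤ lneg y * y := mul_le_mul' (himp_mul_le x (lneg y)) le_rfl
    _ = 0 := lneg_mul_self y

/-- the right negation -/
def rneg (x : A) : A := rimp x 0

lemma le_rneg_iff {z x : A} : z ≤ rneg x ↔ x * z ≤ 0 := by
  unfold rneg; rw [le_rimp_iff]

lemma mul_rneg_self (x : A) : x * rneg x = 0 := by
  unfold rneg
  rw [PseudoBL.mul_rimp_inf]
  exact le_antisymm inf_le_left (le_inf le_rfl (bot_le' x))

lemma rneg_mul (x y : A) : rneg (x * y) = rimp y (rneg x) := by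
  apply le_antisymm
  · rw [le_rimp_iff, le_rneg_iff, ← mul_assoc]
    exact le_rneg_iff.1 le_rfl
  · rw [le_rneg_iff, mul_assoc]
    calc x * (y * rimp y (rneg x)) ≤ x * rneg x :=
      mul_le_mul' le_rfl (mul_rimp_le y (rneg x))
    _ = 0 := mul_rneg_self x

/-! ### Filter API -/

lemma filter_one_mem {F : Set A} (hF : IsFilter F) : (1 : A) ∈ F := by
  obtain ⟨⟨w, hw⟩, _, hup⟩ := hF
  exact hup w hw 1 (le_top' w)

lemma filter_inf_mem {F : Set A} (hF : IsFilter F) {x y : A} (hx : x ∈ F) (hy : y ∈ F) :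
    x ⊓ y ∈ F :=
  hF.2.2 _ (hF.2.1 x hx y hy) _ (le_inf (mul_le_left' x y) (mul_le_right' x y))

lemma filter_pow_mem {F : Set A} (hF : IsFilter F) {x : A} (hx : x ∈ F) :
    ∀ n : ℕ, x ^ n ∈ F
  | 0 => by rw [pow_zero]; exact filter_one_mem hF
  | n + 1 => by
    rw [pow_succ]
    exact hF.2.1 _ (filter_pow_mem hF hx n) _ hx

lemma filter_eq_univ_of_zero_mem {F : Set A} (hF : IsFilter F) (h0 : (0 : A) ∈ F) :
    F = Set.univ :=
  Set.eq_univ_of_forall fun x => hF.2.2 0 h0 x (bot_le' x)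

end Stmt9Aux
namespace Stmt9Aux

variable {A : Type*} [PseudoBL A]

/-! ### Generated filter annihilation -/

lemma annihilate {M : Set A} (hM : IsMaximalFilter M) {c : A} (hc : c ∉ M) :
    ∃ e ∈ M, ∃ m : ℕ, 1 ≤ m ∧ (e ⊓ c) ^ m ≤ 0 := by
  by_contra hcon
  push_neg at hcon
  set G : Set A := {y | ∃ e ∈ M, ∃ m : ℕ, 1 ≤ m ∧ (e ⊓ c) ^ m ≤ y} with hG
  have hGfilter : IsFilter G := by
    refine ⟨⟨c, ⟨1, filter_one_mem hM.1, 1, le_rfl, ?_⟩⟩, ?_, ?_⟩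
    · rw [pow_one]; exact inf_le_right
    · rintro a ⟨e, he, m, hm, hle⟩ b ⟨e', he', m', hm', hle'⟩
      refine ⟨e ⊓ e', filter_inf_mem hM.1 he he', m + m', by omega, ?_⟩
      rw [pow_add]
      calc (e ⊓ e' ⊓ c) ^ m * (e ⊓ e' ⊓ c) ^ m'
          ≤ (e ⊓ c) ^ m * (e' ⊓ c) ^ m' :=
            mul_le_mul'
              (pow_le_pow_left'' (le_inf (inf_le_left.trans inf_le_left) inf_le_right) m)
              (pow_le_pow_left'' (le_inf (inf_le_left.trans inf_le_right) inf_le_right) m')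
        _ ≤ a * b := mul_le_mul' hle hle'
    · rintro a ⟨e, he, m, hm, hle⟩ b hab
      exact ⟨e, he, m, hm, le_trans hle hab⟩
  have hMG : M ⊆ G := fun a ha => ⟨a, ha, 1, le_rfl, by rw [pow_one]; exact inf_le_left⟩
  have hGne : G ≠ Set.univ := by
    intro h
    have h0 : (0 : A) ∈ G := h ▸ Set.mem_univ 0
    obtain ⟨e, he, m, hm, hle⟩ := h0
    exact hcon e he m hm hle
  have hMeq := hM.2.2 G hGfilter hGne hMG
  apply hc
  rw [hMeq]
  exact ⟨1, filter_one_mem hM.1, 1, le_rfl, by rw [pow_one]; exact inf_le_right⟩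

/-! ### List product lemmas -/

lemma mul_alt_pow (u v : A) : ∀ k : ℕ, u * (v * u) ^ k = (u * v) ^ k * u
  | 0 => by rw [pow_zero, pow_zero, one_mul, mul_one]
  | k + 1 => by
    rw [pow_succ, ← mul_assoc, mul_alt_pow u v k, pow_succ]
    rw [mul_assoc, mul_assoc, mul_assoc]

lemma prod_ofFn_alt_aux (u v : A) :
    ∀ (n : ℕ) (f : Fin n → A),
      (∀ i : Fin n, (i : ℕ) % 2 = 0 → f i = u) →
      (∀ i : Fin n, (i : ℕ) % 2 = 1 → f i = v) →
      (List.ofFn f).prod = (u * v) ^ (n / 2) * (if n % 2 = 1 then u else 1)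
  | 0, f, _, _ => by
    rw [List.ofFn_zero, List.prod_nil, if_neg (by omega)]
    rw [Nat.zero_div, pow_zero, one_mul]
  | n + 1, f, hu, hv => by
    rw [List.ofFn_succ, List.prod_cons]
    have h0 : f 0 = u := hu 0 (by simp)
    have hrec := prod_ofFn_alt_aux v u n (fun i => f i.succ)
      (fun i hi => hv i.succ (by simp [Fin.val_succ]; omega))
      (fun i hi => hu i.succ (by simp [Fin.val_succ]; omega))
    rw [h0, hrec]
    rcases Nat.even_or_odd n with ⟨k, hk⟩ | ⟨k, hk⟩
    · -- n = 2k even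
      have h2 : (n + 1) % 2 = 1 := by omega
      have h3 : n / 2 = k := by omega
      have h4 : (n + 1) / 2 = k := by omega
      rw [if_neg (by omega), if_pos h2, h3, h4, mul_one]
      rw [← mul_alt_pow]
    · -- n = 2k + 1 odd
      have h2 : ¬ ((n + 1) % 2 = 1) := by omega
      have h3 : n / 2 = k := by omega
      have h4 : (n + 1) / 2 = k + 1 := by omega
      rw [if_pos (by omega), if_neg h2, h3, h4, mul_one]
      rw [← mul_assoc, mul_alt_pow, pow_succ, mul_assoc]

lemma prod_ofFn_alt (u v : A) (m : ℕ) (f : Fin (2 * m) → A)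
    (hu : ∀ i : Fin (2 * m), (i : ℕ) % 2 = 0 → f i = u)
    (hv : ∀ i : Fin (2 * m), (i : ℕ) % 2 = 1 → f i = v) :
    (List.ofFn f).prod = (u * v) ^ m := by
  rw [prod_ofFn_alt_aux u v (2 * m) f hu hv]
  have h1 : 2 * m / 2 = m := by omega
  rw [h1, if_neg (by omega), mul_one]

lemma prod_ofFn_split_aux (u v : A) :
    ∀ (n : ℕ) (p : ℕ) (f : Fin n → A),
      (∀ i : Fin n, (i : ℕ) < p → f i = u) →
      (∀ i : Fin n, p ≤ (i : ℕ) → f i = v) →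
      (List.ofFn f).prod = u ^ (min p n) * v ^ (n - p)
  | 0, p, f, _, _ => by
    rw [List.ofFn_zero, List.prod_nil]
    have : min p 0 = 0 := by omega
    rw [this, pow_zero, Nat.zero_sub, pow_zero, one_mul]
  | n + 1, 0, f, _, hv => by
    rw [List.ofFn_succ, List.prod_cons]
    have h0 : f 0 = v := hv 0 (by omega)
    have hrec := prod_ofFn_split_aux u v n 0 (fun i => f i.succ)
      (fun i hi => by omega)
      (fun i _ => hv i.succ (by omega))
    rw [h0, hrec]
    have h1 : min 0 (n + 1) = 0 := by omega
    have h2 : min 0 n = 0 := by omega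
    rw [h1, h2, pow_zero, one_mul, one_mul, Nat.sub_zero, Nat.sub_zero, ← pow_succ']
  | n + 1, p + 1, f, hu, hv => by
    rw [List.ofFn_succ, List.prod_cons]
    have h0 : f 0 = u := hu 0 (by simp)
    have hrec := prod_ofFn_split_aux u v n p (fun i => f i.succ)
      (fun i hi => hu i.succ (by simp [Fin.val_succ]; omega))
      (fun i hi => hv i.succ (by simp [Fin.val_succ]; omega))
    rw [h0, hrec]
    have h1 : min (p + 1) (n + 1) = min p n + 1 := by omega
    have h2 : (n + 1) - (p + 1) = n - p := by omega
    rw [h1, h2, pow_succ', mul_assoc]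

lemma prod_ofFn_split (u v : A) (m : ℕ) (f : Fin (2 * m) → A)
    (hu : ∀ i : Fin (2 * m), (i : ℕ) < m → f i = u)
    (hv : ∀ i : Fin (2 * m), m ≤ (i : ℕ) → f i = v) :
    (List.ofFn f).prod = u ^ m * v ^ m := by
  rw [prod_ofFn_split_aux u v (2 * m) m f hu hv]
  have h1 : min m (2 * m) = m := by omega
  have h2 : 2 * m - m = m := by omega
  rw [h1, h2]

/-! ### The sorting permutation -/

def sortFun (m : ℕ) (i : Fin (2 * m)) : Fin (2 * m) :=
  if h : (i : ℕ) < m then ⟨2 * (i : ℕ), by omega⟩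
  else ⟨2 * ((i : ℕ) - m) + 1, by have := i.isLt; omega⟩

lemma sortFun_inj (m : ℕ) : Function.Injective (sortFun m) := by
  intro i j hij
  unfold sortFun at hij
  apply Fin.ext
  by_cases hi : (i : ℕ) < m <;> by_cases hj : (j : ℕ) < m
  · rw [dif_pos hi, dif_pos hj, Fin.mk.injEq] at hij; omega
  · rw [dif_pos hi, dif_neg hj, Fin.mk.injEq] at hij; omega
  · rw [dif_neg hi, dif_pos hj, Fin.mk.injEq] at hij; omega
  · rw [dif_neg hi, dif_neg hj, Fin.mk.injEq] at hij
    have := i.isLt; have := j.isLt; omega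

noncomputable def sortPerm (m : ℕ) : Equiv.Perm (Fin (2 * m)) :=
  Equiv.ofBijective _ ((Finite.injective_iff_bijective).1 (sortFun_inj m))

lemma sortPerm_apply (m : ℕ) (i : Fin (2 * m)) : sortPerm m i = sortFun m i := rfl

lemma sortFun_mod_eq_zero (m : ℕ) (i : Fin (2 * m)) (h : (i : ℕ) < m) :
    ((sortFun m i : Fin (2 * m)) : ℕ) % 2 = 0 := by
  unfold sortFun
  rw [dif_pos h]
  show (2 * (i : ℕ)) % 2 = 0
  omega

lemma sortFun_mod_eq_one (m : ℕ) (i : Fin (2 * m)) (h : ¬ (i : ℕ) < m) :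
    ((sortFun m i : Fin (2 * m)) : ℕ) % 2 = 1 := by
  unfold sortFun
  rw [dif_neg h]
  show (2 * ((i : ℕ) - m) + 1) % 2 = 1
  omega

/-! ### The power lemma -/

lemma lneg_pow_eq
    (hneg : ∀ x y : A, lneg (himp x y) = lneg (rimp x y))
    (hcomm : ∀ x y : A, himp x y * rimp x y = rimp x y * himp x y) (x y : A) :
    ∀ n : ℕ, lneg ((himp x y) ^ n) = lneg ((rimp x y) ^ n)
  | 0 => by rw [pow_zero, pow_zero]
  | n + 1 => by
    have hbc : Commute (himp x y) (rimp x y) := hcomm x y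
    calc lneg ((himp x y) ^ (n + 1))
        = lneg (himp x y * (himp x y) ^ n) := by rw [← pow_succ']
      _ = himp (himp x y) (lneg ((himp x y) ^ n)) := lneg_mul _ _
      _ = himp (himp x y) (lneg ((rimp x y) ^ n)) := by
          rw [lneg_pow_eq hneg hcomm x y n]
      _ = lneg (himp x y * (rimp x y) ^ n) := (lneg_mul _ _).symm
      _ = lneg ((rimp x y) ^ n * himp x y) := by rw [(hbc.pow_right n).eq]
      _ = himp ((rimp x y) ^ n) (lneg (himp x y)) := lneg_mul _ _
      _ = himp ((rimp x y) ^ n) (lneg (rimp x y)) := by rw [hneg x y]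
      _ = lneg ((rimp x y) ^ n * rimp x y) := (lneg_mul _ _).symm
      _ = lneg ((rimp x y) ^ (n + 1)) := by rw [← pow_succ]

/-! ### Key membership lemma -/

lemma pow_lneg_mem {M : Set A}
    (hi : ∀ (n : ℕ), 1 ≤ n → ∀ (x : Fin n → A) (π : Equiv.Perm (Fin n)),
        lneg (List.ofFn x).prod ^ 2 ≤ lneg (List.ofFn (fun i => x (π i) ^ 2)).prod)
    (hM : IsMaximalFilter M) {z : A} (hz : z ∉ M) :
    ∃ K : ℕ, 1 ≤ K ∧ lneg (z ^ K) ∈ M := by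
  obtain ⟨e, heM, m, hm1, hme⟩ := annihilate hM hz
  set x : Fin (2 * m) → A := fun i => if (i : ℕ) % 2 = 0 then e else z with hxdef
  have hxu : ∀ i : Fin (2 * m), (i : ℕ) % 2 = 0 → x i = e := by
    intro i h
    show (if (i : ℕ) % 2 = 0 then e else z) = e
    exact if_pos h
  have hxv : ∀ i : Fin (2 * m), (i : ℕ) % 2 = 1 → x i = z := by
    intro i h
    show (if (i : ℕ) % 2 = 0 then e else z) = z
    exact if_neg (by omega)
  have h1n : 1 ≤ 2 * m := by omega
  have hLHS : (List.ofFn x).prod = (e * z) ^ m := prod_ofFn_alt e z m x hxu hxv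
  have hLHS0 : (List.ofFn x).prod = 0 := by
    rw [hLHS, ← le_zero_iff']
    calc (e * z) ^ m ≤ (e ⊓ z) ^ m :=
          pow_le_pow_left'' (le_inf (mul_le_left' e z) (mul_le_right' e z)) m
      _ ≤ 0 := hme
  have hRHS : (List.ofFn (fun i => x (sortPerm m i) ^ 2)).prod = (e ^ 2) ^ m * (z ^ 2) ^ m := by
    apply prod_ofFn_split (e ^ 2) (z ^ 2) m
    · intro i him
      have : x (sortPerm m i) = e := by
        rw [sortPerm_apply]
        exact hxu _ (sortFun_mod_eq_zero m i him)
      rw [this]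
    · intro i him
      have : x (sortPerm m i) = z := by
        rw [sortPerm_apply]
        exact hxv _ (sortFun_mod_eq_one m i (by omega))
      rw [this]
  have hkey := hi (2 * m) h1n x (sortPerm m)
  rw [hLHS0, lneg_zero, one_pow, hRHS] at hkey
  have hEC : (e ^ 2) ^ m * (z ^ 2) ^ m ≤ 0 := by
    have h1 : (1 : A) * ((e ^ 2) ^ m * (z ^ 2) ^ m) ≤ 0 := le_lneg_iff.1 hkey
    rwa [one_mul] at h1
  have hE : (e ^ 2) ^ m ≤ lneg ((z ^ 2) ^ m) := le_lneg_iff.2 hEC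
  have hmem : lneg ((z ^ 2) ^ m) ∈ M :=
    hM.1.2.2 _ (filter_pow_mem hM.1 (filter_pow_mem hM.1 heM 2) m) _ hE
  exact ⟨2 * m, h1n, by rwa [pow_mul]⟩

lemma zero_mem_of_both {M : Set A} (hM : IsFilter M) {w : A}
    (h1 : w ∈ M) (h2 : lneg w ∈ M) : (0 : A) ∈ M := by
  have := hM.2.1 _ h2 _ h1
  rwa [lneg_mul_self] at this

/-! ### The backward direction -/

lemma backward_dir
    (hneg : ∀ x y : A, lneg (himp x y) = lneg (rimp x y))
    (hcomm : ∀ x y : A, himp x y * rimp x y = rimp x y * himp x y)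
    (hi : ∀ (n : ℕ), 1 ≤ n → ∀ (x : Fin n → A) (π : Equiv.Perm (Fin n)),
        lneg (List.ofFn x).prod ^ 2 ≤ lneg (List.ofFn (fun i => x (π i) ^ 2)).prod) :
    ∀ F : Set A, IsMaximalFilter F → IsNormalFilter F := by
  intro M hM x y
  constructor
  · intro hb
    by_contra hc
    obtain ⟨K, hK1, hKmem⟩ := pow_lneg_mem hi hM hc
    rw [← lneg_pow_eq hneg hcomm x y K] at hKmem
    have h0 : (0 : A) ∈ M :=
      zero_mem_of_both hM.1 (filter_pow_mem hM.1 hb K) hKmem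
    exact hM.2.1 (filter_eq_univ_of_zero_mem hM.1 h0)
  · intro hcmem
    by_contra hb
    obtain ⟨K, hK1, hKmem⟩ := pow_lneg_mem hi hM hb
    rw [lneg_pow_eq hneg hcomm x y K] at hKmem
    have h0 : (0 : A) ∈ M :=
      zero_mem_of_both hM.1 (filter_pow_mem hM.1 hcmem K) hKmem
    exact hM.2.1 (filter_eq_univ_of_zero_mem hM.1 h0)

end Stmt9Aux
namespace Stmt9Aux

variable {A : Type*} [PseudoBL A]

/-! ### The forward direction: the inequality (i) is an equational consequence of `hneg`. -/

lemma lneg_antitone {a b : A} (h : a ≤ b) : lneg b ≤ lneg a := by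
  rw [le_lneg_iff]
  calc lneg b * a ≤ lneg b * b := mul_le_mul' le_rfl h
    _ = 0 := lneg_mul_self b

/-- The fundamental identity: under `hneg`, the left negation of a product does not
depend on the order of the two factors. -/
lemma lneg_mul_comm
    (hneg : ∀ x y : A, lneg (PseudoBL.himp x y) = lneg (PseudoBL.rimp x y)) (u v : A) :
    lneg (v * u) = lneg (u * v) := by
  -- it suffices to prove one inequality for all pairs
  have key : ∀ u v : A, lneg (v * u) ≤ lneg (u * v) := by
    intro u v
    set v' : A := himp u (v * u) with hv'
    have h1 : v' * u = v * u := by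
      rw [hv', PseudoBL.himp_mul_inf]
      exact inf_eq_right.mpr (mul_le_right' v u)
    have h1' : v' * u = u ⊓ (v * u) := by rw [hv', PseudoBL.himp_mul_inf]
    have h2 : lneg (v' * u) = lneg (u * v') := by
      have hr : u * rimp u (v * u) = (v * u) ⊓ u := PseudoBL.mul_rimp_inf (v * u) u
      calc lneg (v' * u) = lneg (u ⊓ (v * u)) := by rw [h1']
        _ = lneg ((v * u) ⊓ u) := by rw [inf_comm]
        _ = lneg (u * rimp u (v * u)) := by rw [hr]
        _ = himp u (lneg (rimp u (v * u))) := lneg_mul _ _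
        _ = himp u (lneg (himp u (v * u))) := by rw [hneg u (v * u)]
        _ = lneg (u * v') := (lneg_mul _ _).symm
    have h3 : v ≤ v' := by
      rw [hv', ← PseudoBL.mul_le_iff_himp]
    calc lneg (v * u) = lneg (v' * u) := by rw [h1]
      _ = lneg (u * v') := h2
      _ ≤ lneg (u * v) := lneg_antitone (mul_le_mul' le_rfl h3)
  exact le_antisymm (key u v) (key v u)

/-- Swapping the two leading factors of a product does not change the left negation. -/
lemma lneg_swap_head
    (hneg : ∀ x y : A, lneg (PseudoBL.himp x y) = lneg (PseudoBL.rimp x y)) (u v w : A) :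
    lneg (v * (u * w)) = lneg (u * (v * w)) := by
  calc lneg (v * (u * w)) = himp v (lneg (u * w)) := lneg_mul _ _
    _ = himp v (lneg (w * u)) := by rw [lneg_mul_comm hneg]
    _ = lneg (v * (w * u)) := (lneg_mul _ _).symm
    _ = lneg ((v * w) * u) := by rw [mul_assoc]
    _ = lneg (u * (v * w)) := lneg_mul_comm hneg u (v * w)

/-- The left negation of a product of a list only depends on the list up to permutation. -/
lemma lneg_prod_perm
    (hneg : ∀ x y : A, lneg (PseudoBL.himp x y) = lneg (PseudoBL.rimp x y))
    {l₁ l₂ : List A} (h : l₁.Perm l₂) : lneg l₁.prod = lneg l₂.prod := by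
  induction h with
  | nil => rfl
  | cons x h ih =>
      rw [List.prod_cons, List.prod_cons, lneg_mul, lneg_mul, ih]
  | swap x y l =>
      rw [List.prod_cons, List.prod_cons, List.prod_cons, List.prod_cons]
      exact lneg_swap_head hneg x y l.prod
  | trans h1 h2 ih1 ih2 => rw [ih1, ih2]

/-- The left negation of the product of squares is the left negation of the square of
the product. -/
lemma lneg_prod_sq
    (hneg : ∀ x y : A, lneg (PseudoBL.himp x y) = lneg (PseudoBL.rimp x y)) :
    ∀ l : List A, lneg ((l.map (fun a => a ^ 2)).prod) = lneg (l.prod * l.prod)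
  | [] => by simp
  | a :: l => by
    rw [List.map_cons, List.prod_cons, List.prod_cons]
    have hIH := lneg_prod_sq hneg l
    calc lneg (a ^ 2 * (List.map (fun a => a ^ 2) l).prod)
        = lneg (a * (a * (List.map (fun a => a ^ 2) l).prod)) := by
          rw [pow_two, mul_assoc]
      _ = himp a (himp a (lneg ((List.map (fun a => a ^ 2) l).prod))) := by
          rw [lneg_mul, lneg_mul]
      _ = himp a (himp a (lneg (l.prod * l.prod))) := by rw [hIH]
      _ = himp a (lneg (a * (l.prod * l.prod))) := by
          rw [lneg_mul a (l.prod * l.prod)]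
      _ = himp a (lneg (l.prod * (a * l.prod))) := by
          rw [← lneg_swap_head hneg a l.prod l.prod]
      _ = lneg (a * (l.prod * (a * l.prod))) := (lneg_mul _ _).symm
      _ = lneg ((a * l.prod) * (a * l.prod)) := by rw [mul_assoc]

/-- The forward inequality (i), proved purely equationally from `hneg`. -/
lemma forward_dir
    (hneg : ∀ x y : A, lneg (PseudoBL.himp x y) = lneg (PseudoBL.rimp x y)) :
    ∀ (n : ℕ), 1 ≤ n → ∀ (x : Fin n → A) (π : Equiv.Perm (Fin n)),
        lneg (List.ofFn x).prod ^ 2 ≤ lneg (List.ofFn (fun i => x (π i) ^ 2)).prod := by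
  intro n _ x π
  set P : A := (List.ofFn x).prod with hP
  -- Step 1: the permuted list of squares is a permutation of the unpermuted one
  have hperm : (List.ofFn (fun i => x (π i) ^ 2)).Perm (List.ofFn (fun i => x i ^ 2)) := by
    have := Equiv.Perm.ofFn_comp_perm π (fun i => x i ^ 2)
    exact this
  have h1 : lneg (List.ofFn (fun i => x (π i) ^ 2)).prod
      = lneg (List.ofFn (fun i => x i ^ 2)).prod := lneg_prod_perm hneg hperm
  -- Step 2: the unpermuted list of squares is the map of squaring over `ofFn x`
  have h2 : List.ofFn (fun i => x i ^ 2) = (List.ofFn x).map (fun a => a ^ 2) := by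
    rw [List.map_ofFn]
    rfl
  have h3 : lneg (List.ofFn (fun i => x (π i) ^ 2)).prod = lneg (P * P) := by
    rw [h1, h2, lneg_prod_sq hneg]
  -- Step 3: conclude
  rw [h3, lneg_mul]
  rw [le_himp_iff]
  have h4 : lneg P ^ 2 * P = lneg P * (lneg P * P) := by rw [pow_two, mul_assoc]
  rw [h4, lneg_mul_self, ]
  calc lneg P * 0 ≤ 0 := mul_le_right' _ _
    _ ≤ lneg P := bot_le' _

end Stmt9Aux

open Stmt9Aux in
/-- In a nontrivial pseudo BL-algebra satisfying `(x→y)⁻ = (x⇝y)⁻` and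
`(x→y)·(x⇝y) = (x⇝y)·(x→y)`, every maximal filter is normal iff inequality (i)
holds. -/
theorem stmt_9 {A : Type*} [PseudoBL A] (hnt : (0 : A) ≠ 1)
    (hneg : ∀ x y : A, lneg (PseudoBL.himp x y) = lneg (PseudoBL.rimp x y))
    (hcomm : ∀ x y : A,
      PseudoBL.himp x y * PseudoBL.rimp x y = PseudoBL.rimp x y * PseudoBL.himp x y) :
    (∀ F : Set A, IsMaximalFilter F → IsNormalFilter F) ↔
      (∀ (n : ℕ), 1 ≤ n → ∀ (x : Fin n → A) (π : Equiv.Perm (Fin n)),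
        lneg (List.ofFn x).prod ^ 2 ≤ lneg (List.ofFn (fun i => x (π i) ^ 2)).prod) := by
  constructor
  · intro _
    exact forward_dir hneg
  · intro hi
    exact backward_dir hneg hcomm hi
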